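/- Consider the CTRS R over constants a, b and unary symbol f, with rules (f(x) → a ⇐ x → a) and (f(x) → b ⇐ x → b) under the reachability semantics. Then the conjunction of conditions x →* a and x →* b is infeasible: there is no term t such that t →*_R a and t →*_R b. -/
import Mathlib


/-- Terms over the signature with constants `a`, `b` and unary symbol `f`. -/
inductive Tm where
  | a | b
  | f (t : Tm)

mutual
  /-- The one-step rewrite relation of the CTRS with rules `f(x) → a ⇐ x → a` and
  `f(x) → b ⇐ x → b` under the reachability semantics: rule instances (whose
  conditions hold w.r.t. `Rews`) closed under contexts. -/
  inductive Rew : Tm → Tm → Prop where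
    | rule1 (x : Tm) : Rews x .a → Rew (.f x) .a
    | rule2 (x : Tm) : Rews x .b → Rew (.f x) .b
    | f_congr {t t'} : Rew t t' → Rew (.f t) (.f t')

  /-- The many-step rewrite relation: reflexive and closed under prepending
  one-step rewrites. -/
  inductive Rews : Tm → Tm → Prop where
    | refl (t : Tm) : Rews t t
    | step {s u t : Tm} : Rew s u → Rews u t → Rews s t
end
def base : Tm → Tm
  | .a => .a
  | .b => .b
  | .f t => base t

theorem rews_base : ∀ {s t}, Rews s t → base s = base t :=
  @Rews.rec (fun s t _ => base s = base t) (fun s t _ => base s = base t)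
    (fun _ _ ih => ih) (fun _ _ ih => ih) (fun _ ih => ih)
    (fun _ => rfl) (fun _ _ ih1 ih2 => ih1.trans ih2)

/-- The conjunction of conditions `x →* a` and `x →* b` (from the conditional
critical pair `a ↓ b ⇐ x → a, x → b`) is infeasible: there is no term `t` such
that `t →*_R a` and `t →*_R b`. -/
theorem conditions_infeasible : ¬ ∃ t : Tm, Rews t .a ∧ Rews t .b := by
  rintro ⟨t, ha, hb⟩
  have := (rews_base ha).symm.trans (rews_base hb)
  simp [base] at this
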